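/- The exponential generating function of the sequence a_n = ∑_{k=1}^{n} (-1)^(k-1) (k-1)! c(n,k) satisfies ∑_{n≥1} a_n x^n / n! = log(1 - log(1-x)) as an identity of formal power series. -/

import Mathlib

/-- The number of cycles (orbits, including fixed points) of a permutation. -/
noncomputable def cycleCount {n : ℕ} (σ : Equiv.Perm (Fin n)) : ℕ :=
  Nat.card (Quotient (MulAction.orbitRel (Subgroup.zpowers σ) (Fin n)))

/-- The unsigned Stirling number of the first kind. -/
noncomputable def stirling1 (n k : ℕ) : ℕ :=
  Nat.card {σ : Equiv.Perm (Fin n) // cycleCount σ = k}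


/-- `a n = ∑_{k=1}^n (-1)^(k-1) (k-1)! c(n,k)`. -/
noncomputable def a (n : ℕ) : ℤ :=
  ∑ k ∈ Finset.Icc 1 n, (-1 : ℤ) ^ (k - 1) * (Nat.factorial (k - 1) : ℤ) * (stirling1 n k : ℤ)

/-- The formal power series `-log(1-x) = ∑_{m≥1} x^m/m` over `ℚ`. -/
noncomputable def negLogOneSub : PowerSeries ℚ :=
  PowerSeries.mk fun m => if m = 0 then 0 else 1 / (m : ℚ)

/-- The formal logarithm `log(1+f)` of `1 + f`, for `f` a power series with zero constant
term: its `n`-th coefficient is `∑_{m=1}^{n} (-1)^(m-1)/m · [x^n] f^m`. -/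
noncomputable def logOnePlus (f : PowerSeries ℚ) : PowerSeries ℚ :=
  PowerSeries.mk fun n =>
    ∑ m ∈ Finset.Icc 1 n, (-1 : ℚ) ^ (m - 1) / (m : ℚ) * PowerSeries.coeff n (f ^ m)

open PowerSeries

open Equiv Equiv.Perm

/-- Number of cycles via the `SameCycle` quotient, for a general type. -/
noncomputable def qcard {α : Type*} (σ : Equiv.Perm α) : ℕ :=
  Nat.card (Quotient (Equiv.Perm.SameCycle.setoid σ))

lemma cycleCount_eq_qcard {n : ℕ} (σ : Equiv.Perm (Fin n)) : cycleCount σ = qcard σ := by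
  have hs : MulAction.orbitRel (Subgroup.zpowers σ) (Fin n) = Equiv.Perm.SameCycle.setoid σ := by
    apply Setoid.ext
    intro x y
    show x ∈ MulAction.orbit (Subgroup.zpowers σ) y ↔ σ.SameCycle x y
    rw [MulAction.mem_orbit_iff]
    constructor
    · rintro ⟨⟨g, hg⟩, h⟩
      obtain ⟨k, rfl⟩ := Subgroup.mem_zpowers_iff.mp hg
      exact (Equiv.Perm.SameCycle.symm ⟨k, h⟩)
    · rintro ⟨k, hk⟩
      exact ⟨⟨σ ^ (-k), Subgroup.mem_zpowers_iff.mpr ⟨-k, rfl⟩⟩, by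
        show (σ ^ (-k)) y = x
        rw [← hk]; simp [zpow_neg]⟩
  rw [cycleCount, qcard, hs]

section helpers

variable {β γ Q : Type*}

lemma pow_invariant (σ : Equiv.Perm β) (g : β → Q) (h : ∀ z, g (σ z) = g z) :
    ∀ (i : ℕ) (z : β), g ((σ ^ i) z) = g z := by
  intro i
  induction i with
  | zero => intro z; simp
  | succ k ih => intro z; rw [pow_succ, Equiv.Perm.mul_apply, ih, h]

lemma descend [Finite β] (σ : Equiv.Perm β) (g : β → Q) (h : ∀ z, g (σ z) = g z)
    {z w : β} (hzw : σ.SameCycle z w) : g z = g w := by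
  obtain ⟨i, -, -, rfl⟩ := hzw.exists_pow_eq''
  exact (pow_invariant σ g h i z).symm

lemma chain_pow (e : Equiv.Perm β) (σ : Equiv.Perm γ) (f : β → γ)
    (h : ∀ y, σ.SameCycle (f y) (f (e y))) :
    ∀ (i : ℕ) (y : β), σ.SameCycle (f y) (f ((e ^ i) y)) := by
  intro i
  induction i with
  | zero => intro y; simpa using Equiv.Perm.SameCycle.refl σ (f y)
  | succ k ih =>
      intro y
      rw [pow_succ', Equiv.Perm.mul_apply]
      exact (ih y).trans (h ((e ^ k) y))

instance optFinite [Finite β] : Finite (Option β) := by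
  have e : Option β ≃ β ⊕ PUnit.{1} := Equiv.optionEquivSumPUnit β
  exact Finite.of_equiv _ e.symm

lemma natCard_option (Q : Type*) [Finite Q] : Nat.card (Option Q) = Nat.card Q + 1 := by
  have e : Option Q ≃ Q ⊕ PUnit.{1} := Equiv.optionEquivSumPUnit Q
  rw [Nat.card_congr e, Nat.card_sum]
  simp

lemma chain [Finite β] (e : Equiv.Perm β) (σ : Equiv.Perm γ) (f : β → γ)
    (h : ∀ y, σ.SameCycle (f y) (f (e y))) {y z : β} (hyz : e.SameCycle y z) :
    σ.SameCycle (f y) (f z) := by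
  obtain ⟨i, -, -, rfl⟩ := hyz.exists_pow_eq''
  exact chain_pow e σ f h i y

lemma qcard_permCongr [Finite β] (g : β ≃ γ) (e : Equiv.Perm β) :
    qcard (g.permCongr e) = qcard e := by
  haveI : Finite γ := Finite.of_equiv β g
  set σ := g.permCongr e with hσ
  have happ : ∀ b, σ b = g (e (g.symm b)) := fun b => Equiv.permCongr_apply g e b
  set G : γ → Quotient (Equiv.Perm.SameCycle.setoid e) := fun b => ⟦g.symm b⟧ with hG
  have hinv : ∀ z, G (σ z) = G z := by
    intro z
    show (⟦g.symm (σ z)⟧ : Quotient (Equiv.Perm.SameCycle.setoid e)) = ⟦g.symm z⟧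
    rw [happ, Equiv.symm_apply_apply]
    exact Quotient.sound (Equiv.Perm.SameCycle.symm ⟨1, by simp⟩)
  have hdesc : ∀ z w : γ, σ.SameCycle z w → G z = G w := fun z w h => descend σ G hinv h
  refine (Nat.card_eq_of_bijective (Quotient.lift G hdesc) ⟨?_, ?_⟩)
  · intro q1 q2
    refine Quotient.inductionOn₂ q1 q2 (fun b1 b2 h => ?_)
    have h' : e.SameCycle (g.symm b1) (g.symm b2) := Quotient.exact h
    refine Quotient.sound ?_
    have step : ∀ y, σ.SameCycle (g y) (g (e y)) := by
      intro y; exact ⟨1, by simp [happ]⟩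
    have := chain e σ g step h'
    exact (by simpa using this : σ.SameCycle b1 b2)
  · intro q
    refine Quotient.inductionOn q (fun a => ?_)
    exact ⟨⟦g a⟧, by show (⟦g.symm (g a)⟧ : Quotient _) = ⟦a⟧; rw [Equiv.symm_apply_apply]⟩

lemma qcard_optionCongr [Finite β] [DecidableEq β] (e : Equiv.Perm β) :
    qcard e.optionCongr = qcard e + 1 := by
  set τ : Equiv.Perm (Option β) := e.optionCongr with hτ
  have happ : ∀ y : β, τ (some y) = some (e y) := fun y => rfl
  have happn : τ none = none := rfl
  set G : Option β → Option (Quotient (Equiv.Perm.SameCycle.setoid e)) :=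
    Option.map (Quotient.mk _) with hG
  have hinv : ∀ z, G (τ z) = G z := by
    rintro (_ | y)
    · rfl
    · show some (⟦e y⟧ : Quotient _) = some ⟦y⟧
      exact congrArg some (Quotient.sound (Equiv.Perm.SameCycle.symm ⟨1, by simp⟩))
  have hdesc : ∀ z w : Option β, τ.SameCycle z w → G z = G w := fun z w h => descend τ G hinv h
  have hbij : Nat.card (Quotient (Equiv.Perm.SameCycle.setoid τ))
      = Nat.card (Option (Quotient (Equiv.Perm.SameCycle.setoid e))) := by
    refine Nat.card_eq_of_bijective (Quotient.lift G hdesc) ⟨?_, ?_⟩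
    · intro q1 q2
      refine Quotient.inductionOn₂ q1 q2 (fun b1 b2 h => ?_)
      match b1, b2, h with
      | none, none, h => rfl
      | none, some u, h => exact absurd h (by simp [hG])
      | some u, none, h => exact absurd h (by simp [hG])
      | some y, some u, h =>
          refine Quotient.sound ?_
          have h' : e.SameCycle y u := Quotient.exact (Option.some_injective _ h)
          exact chain e τ some (fun y => ⟨1, by simp [happ]⟩) h'
    · rintro (_ | q)
      · exact ⟨⟦none⟧, rfl⟩
      · refine Quotient.inductionOn q (fun a => ?_)
        exact ⟨⟦some a⟧, rfl⟩
  rw [qcard, qcard, hbij, natCard_option]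

lemma qcard_insert [Finite β] [DecidableEq β] (e : Equiv.Perm β) (x : β) :
    qcard (Equiv.swap none (some x) * e.optionCongr) = qcard e := by
  set ρ := Equiv.swap none (some x) * e.optionCongr with hρ
  have hnone : ρ none = some x := by
    show Equiv.swap none (some x) (e.optionCongr none) = some x
    simp
  have hsome : ∀ y : β, ρ (some y) = if e y = x then none else some (e y) := by
    intro y
    show Equiv.swap none (some x) (e.optionCongr (some y)) = _
    by_cases h : e y = x
    · simp [h, Equiv.optionCongr_apply]
    · rw [Equiv.optionCongr_apply]
      show Equiv.swap none (some x) (some (e y)) = _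
      rw [Equiv.swap_apply_of_ne_of_ne (by simp) (by simpa using h), if_neg h]
  have step : ∀ y : β, ρ.SameCycle (some y) (some (e y)) := by
    intro y
    by_cases h : e y = x
    · have h1 : ρ.SameCycle (some y) none := ⟨1, by simp [hsome y, h]⟩
      have h2 : ρ.SameCycle (none : Option β) (some (e y)) := ⟨1, by simp [hnone, h]⟩
      exact h1.trans h2
    · exact ⟨1, by simp [hsome y, h]⟩
  set G : Option β → Quotient (Equiv.Perm.SameCycle.setoid e) :=
    fun z => Option.elim z ⟦x⟧ (Quotient.mk _) with hG
  have hinv : ∀ z, G (ρ z) = G z := by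
    rintro (_ | y)
    · rw [hnone]; rfl
    · rw [hsome y]
      by_cases h : e y = x
      · rw [if_pos h]
        show (⟦x⟧ : Quotient _) = ⟦y⟧
        exact Quotient.sound ((Equiv.Perm.SameCycle.symm ⟨1, h⟩))
      · rw [if_neg h]
        show (⟦e y⟧ : Quotient _) = ⟦y⟧
        exact Quotient.sound (Equiv.Perm.SameCycle.symm ⟨1, rfl⟩)
  have hdesc : ∀ z w : Option β, ρ.SameCycle z w → G z = G w := fun z w h => descend ρ G hinv h
  refine Nat.card_eq_of_bijective (Quotient.lift G hdesc) ⟨?_, ?_⟩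
  · intro q1 q2
    refine Quotient.inductionOn₂ q1 q2 (fun b1 b2 h => ?_)
    refine Quotient.sound ?_
    have hxchain : ∀ u v : β, e.SameCycle u v → ρ.SameCycle (some u) (some v) :=
      fun u v h => chain e ρ some step h
    have hnx : ρ.SameCycle (none : Option β) (some x) := ⟨1, hnone⟩
    match b1, b2 with
    | none, none => exact Equiv.Perm.SameCycle.refl ρ none
    | none, some u =>
        exact hnx.trans (hxchain x u (Quotient.exact h))
    | some u, none =>
        exact (hnx.trans (hxchain x u (Quotient.exact h.symm))).symm
    | some y, some u => exact hxchain y u (Quotient.exact h)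
  · intro q
    refine Quotient.inductionOn q (fun a => ?_)
    exact ⟨⟦some a⟧, rfl⟩

end helpers

section counting

variable {β γ : Type*}

def splitOption (P : Option β → γ → Prop) :
    {p : Option β × γ // P p.1 p.2} ≃ {e : γ // P none e} ⊕ {q : β × γ // P (some q.1) q.2} where
  toFun := fun z => match z with
    | ⟨(none, e), h⟩ => Sum.inl ⟨e, h⟩
    | ⟨(some b, e), h⟩ => Sum.inr ⟨(b, e), h⟩
  invFun := fun s => match s with
    | Sum.inl ⟨e, h⟩ => ⟨(none, e), h⟩
    | Sum.inr ⟨(b, e), h⟩ => ⟨(some b, e), h⟩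
  left_inv := by rintro ⟨⟨(_ | b), e⟩, h⟩ <;> rfl
  right_inv := by rintro (⟨e, h⟩ | ⟨⟨b, e⟩, h⟩) <;> rfl

def prodSubtypeSnd (Q : γ → Prop) : {q : β × γ // Q q.2} ≃ β × {e : γ // Q e} where
  toFun := fun q => (q.1.1, ⟨q.1.2, q.2⟩)
  invFun := fun p => ⟨(p.1, p.2.1), p.2.2⟩
  left_inv := by rintro ⟨⟨b, c⟩, h⟩; rfl
  right_inv := by rintro ⟨b, ⟨c, h⟩⟩; rfl

end counting

lemma stirling1_succ (n k : ℕ) :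
    stirling1 (n + 1) (k + 1) = stirling1 n k + n * stirling1 n (k + 1) := by
  classical
  set P : Option (Fin n) → Equiv.Perm (Fin n) → Prop :=
    fun i e => qcard (Equiv.Perm.decomposeOption.symm (i, e)) = k + 1 with hP
  have e1 : {σ : Equiv.Perm (Fin (n + 1)) // cycleCount σ = k + 1}
      ≃ {σ : Equiv.Perm (Option (Fin n)) // qcard σ = k + 1} :=
    Equiv.subtypeEquiv (Equiv.permCongr (finSuccEquiv n)) (fun σ => by
      rw [cycleCount_eq_qcard, qcard_permCongr])
  have e2 : {σ : Equiv.Perm (Option (Fin n)) // qcard σ = k + 1}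
      ≃ {p : Option (Fin n) × Equiv.Perm (Fin n) // P p.1 p.2} :=
    Equiv.subtypeEquiv Equiv.Perm.decomposeOption (fun σ => by
      show qcard σ = k + 1 ↔ P (Equiv.Perm.decomposeOption σ).1 (Equiv.Perm.decomposeOption σ).2
      rw [hP]
      simp only []
      rw [Prod.mk.eta, Equiv.symm_apply_apply])
  have e3 : {p : Option (Fin n) × Equiv.Perm (Fin n) // P p.1 p.2}
      ≃ {e : Equiv.Perm (Fin n) // P none e}
        ⊕ {q : Fin n × Equiv.Perm (Fin n) // P (some q.1) q.2} := splitOption P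
  have hnone : ∀ e : Equiv.Perm (Fin n), P none e ↔ cycleCount e = k := by
    intro e
    rw [hP]
    simp only []
    rw [Equiv.Perm.decomposeOption_symm_apply]
    show qcard (Equiv.swap none none * e.optionCongr) = k + 1 ↔ _
    rw [Equiv.swap_self]
    show qcard ((1 : Equiv.Perm (Option (Fin n))) * e.optionCongr) = k + 1 ↔ _
    rw [one_mul, qcard_optionCongr, cycleCount_eq_qcard]
    omega
  have hsome : ∀ (b : Fin n) (e : Equiv.Perm (Fin n)),
      P (some b) e ↔ cycleCount e = k + 1 := by
    intro b e
    rw [hP]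
    simp only []
    rw [Equiv.Perm.decomposeOption_symm_apply]
    show qcard (Equiv.swap none (some b) * e.optionCongr) = k + 1 ↔ _
    rw [qcard_insert, cycleCount_eq_qcard]
  have e4 : {e : Equiv.Perm (Fin n) // P none e}
      ≃ {e : Equiv.Perm (Fin n) // cycleCount e = k} := Equiv.subtypeEquivRight hnone
  have e5 : {q : Fin n × Equiv.Perm (Fin n) // P (some q.1) q.2}
      ≃ {q : Fin n × Equiv.Perm (Fin n) // cycleCount q.2 = k + 1} :=
    Equiv.subtypeEquivRight (fun q => hsome q.1 q.2)
  have e6 : {q : Fin n × Equiv.Perm (Fin n) // cycleCount q.2 = k + 1}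
      ≃ Fin n × {e : Equiv.Perm (Fin n) // cycleCount e = k + 1} :=
    prodSubtypeSnd (fun e => cycleCount e = k + 1)
  calc stirling1 (n + 1) (k + 1)
      = Nat.card ({e : Equiv.Perm (Fin n) // cycleCount e = k}
          ⊕ Fin n × {e : Equiv.Perm (Fin n) // cycleCount e = k + 1}) := by
        rw [stirling1]
        exact Nat.card_congr ((((e1.trans e2).trans e3).trans
          (Equiv.sumCongr e4 (e5.trans e6))))
    _ = stirling1 n k + n * stirling1 n (k + 1) := by
        rw [Nat.card_sum, Nat.card_prod, Nat.card_eq_fintype_card (α := Fin n), Fintype.card_fin]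
        rfl

lemma stirling1_zero_zero : stirling1 0 0 = 1 := by
  have h : ∀ σ : Equiv.Perm (Fin 0), cycleCount σ = 0 := by
    intro σ
    have : IsEmpty (Quotient (MulAction.orbitRel (Subgroup.zpowers σ) (Fin 0))) :=
      ⟨fun q => Quotient.inductionOn (motive := fun _ => False) q (fun a => isEmptyElim a)⟩
    exact Nat.card_of_isEmpty
  rw [stirling1, Nat.card_congr (Equiv.subtypeUnivEquiv h), Nat.card_eq_fintype_card,
    Fintype.card_perm]
  simp

lemma stirling1_zero_succ (m : ℕ) : stirling1 0 (m + 1) = 0 := by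
  have h : ∀ σ : Equiv.Perm (Fin 0), cycleCount σ = 0 := by
    intro σ
    have : IsEmpty (Quotient (MulAction.orbitRel (Subgroup.zpowers σ) (Fin 0))) :=
      ⟨fun q => Quotient.inductionOn (motive := fun _ => False) q (fun a => isEmptyElim a)⟩
    exact Nat.card_of_isEmpty
  have : IsEmpty {σ : Equiv.Perm (Fin 0) // cycleCount σ = m + 1} :=
    ⟨fun ⟨σ, hσ⟩ => by simp [h σ] at hσ⟩
  rw [stirling1]
  exact Nat.card_of_isEmpty

lemma stirling1_succ_zero (n : ℕ) : stirling1 (n + 1) 0 = 0 := by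
  have h : ∀ σ : Equiv.Perm (Fin (n + 1)), 0 < cycleCount σ := by
    intro σ
    have : Nonempty (Quotient (MulAction.orbitRel (Subgroup.zpowers σ) (Fin (n + 1)))) :=
      ⟨⟦0⟧⟩
    exact Nat.card_pos
  have : IsEmpty {σ : Equiv.Perm (Fin (n + 1)) // cycleCount σ = 0} :=
    ⟨fun ⟨σ, hσ⟩ => by have := h σ; omega⟩
  rw [stirling1]
  exact Nat.card_of_isEmpty


lemma coeff_derivativeFun' (f : PowerSeries ℚ) (n : ℕ) :
    coeff n (derivativeFun f) = coeff (n + 1) f * (n + 1) := coeff_derivative f n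

lemma deriv_negLog : derivativeFun negLogOneSub = PowerSeries.mk fun _ => (1 : ℚ) := by
  ext n
  rw [coeff_derivativeFun', coeff_mk, negLogOneSub, coeff_mk, if_neg (Nat.succ_ne_zero n)]
  have h : ((n : ℚ) + 1) ≠ 0 := by positivity
  push_cast
  field_simp

lemma ones_eq : (PowerSeries.mk fun _ => (1 : ℚ)) = 1 + X * PowerSeries.mk fun _ => (1 : ℚ) := by
  ext n
  cases n with
  | zero => simp
  | succ k => simp [coeff_mk, PowerSeries.coeff_succ_X_mul, PowerSeries.coeff_one]

lemma deriv_pow_negLog (m : ℕ) :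
    derivativeFun (negLogOneSub ^ (m + 1))
      = ((m + 1 : ℕ) : PowerSeries ℚ) * negLogOneSub ^ m * derivativeFun negLogOneSub := by
  induction m with
  | zero => simp
  | succ k ih =>
      have h2 : negLogOneSub ^ (k + 2) = negLogOneSub ^ (k + 1) * negLogOneSub := by ring
      rw [h2, derivativeFun_mul, ih, smul_eq_mul, smul_eq_mul]
      push_cast
      ring

lemma main_eq (m : ℕ) :
    derivativeFun (negLogOneSub ^ (m + 1))
      = ((m + 1 : ℕ) : PowerSeries ℚ) * negLogOneSub ^ m
        + X * derivativeFun (negLogOneSub ^ (m + 1)) := by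
  rw [deriv_pow_negLog, deriv_negLog]
  nth_rewrite 1 [ones_eq]
  ring

lemma Arec (n m : ℕ) :
    ((n : ℚ) + 1) * coeff (n + 1) (negLogOneSub ^ (m + 1))
      = n * coeff n (negLogOneSub ^ (m + 1)) + ((m : ℚ) + 1) * coeff n (negLogOneSub ^ m) := by
  have hC : ((m + 1 : ℕ) : PowerSeries ℚ) = PowerSeries.C (((m + 1 : ℕ) : ℚ)) :=
    (map_natCast (PowerSeries.C) (m + 1)).symm
  have h := main_eq m
  rw [hC] at h
  cases n with
  | zero =>
      have h0 := congrArg (coeff 0) h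
      rw [map_add, coeff_zero_X_mul, coeff_derivativeFun', coeff_C_mul] at h0
      push_cast at h0 ⊢
      linarith
  | succ k =>
      have h0 := congrArg (coeff (k + 1)) h
      rw [map_add, coeff_succ_X_mul, coeff_derivativeFun', coeff_derivativeFun',
        coeff_C_mul] at h0
      push_cast at h0 ⊢
      linarith


lemma Aeq (n : ℕ) : ∀ m : ℕ,
    (n.factorial : ℚ) * coeff n (negLogOneSub ^ m)
      = (m.factorial : ℚ) * stirling1 n m := by
  induction n with
  | zero =>
      intro m
      cases m with
      | zero => simp [stirling1_zero_zero]
      | succ k =>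
          rw [stirling1_zero_succ]
          have hc : coeff 0 (negLogOneSub ^ (k + 1)) = 0 := by
            rw [coeff_zero_eq_constantCoeff, map_pow]
            simp [negLogOneSub]
          rw [hc]
          simp
  | succ n IH =>
      intro m
      cases m with
      | zero =>
          rw [stirling1_succ_zero]
          simp [PowerSeries.coeff_one]
      | succ m =>
          have h1 := Arec n m
          have IH2 := IH (m + 1)
          have IH3 := IH m
          have hst : (stirling1 (n + 1) (m + 1) : ℚ)
              = (stirling1 n m : ℚ) + n * stirling1 n (m + 1) := by
            rw [stirling1_succ]
            push_cast
            ring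
          rw [Nat.factorial_succ] at IH2
          rw [Nat.factorial_succ n, Nat.factorial_succ m]
          push_cast at IH2 ⊢
          linear_combination (n.factorial : ℚ) * h1 + (n : ℚ) * IH2
            + ((m : ℚ) + 1) * IH3 - ((m : ℚ) + 1) * (m.factorial : ℚ) * hst

/-- `∑_{n≥1} a_n x^n/n! = log(1 - log(1-x))` as formal power series over `ℚ`. -/
theorem stmt1 :
    PowerSeries.mk (fun n => if n = 0 then 0 else (a n : ℚ) / (Nat.factorial n : ℚ))
      = logOnePlus negLogOneSub := by
  ext n
  rw [coeff_mk, logOnePlus, coeff_mk]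
  cases n with
  | zero => simp
  | succ n =>
      rw [if_neg (Nat.succ_ne_zero n)]
      have hn0 : (((n + 1).factorial : ℕ) : ℚ) ≠ 0 :=
        Nat.cast_ne_zero.mpr (Nat.factorial_ne_zero _)
      have key : ∀ m ∈ Finset.Icc 1 (n + 1),
          (-1 : ℚ) ^ (m - 1) / m * coeff (n + 1) (negLogOneSub ^ m)
            = (-1 : ℚ) ^ (m - 1) * ((m - 1).factorial : ℕ) * (stirling1 (n + 1) m : ℕ)
                / ((n + 1).factorial : ℕ) := by
        intro m hm
        obtain ⟨hm1, -⟩ := Finset.mem_Icc.mp hm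
        have hA := Aeq (n + 1) m
        have hfac : (m : ℚ) * ((m - 1).factorial : ℚ) = (m.factorial : ℚ) := by
          exact_mod_cast congrArg (Nat.cast (R := ℚ)) (Nat.mul_factorial_pred (by omega))
        have hm0 : (m : ℚ) ≠ 0 := Nat.cast_ne_zero.mpr (by omega)
        have hA' : coeff (n + 1) (negLogOneSub ^ m)
            = (m.factorial : ℚ) * stirling1 (n + 1) m / ((n + 1).factorial : ℚ) := by
          rw [eq_div_iff hn0]
          linear_combination hA
        rw [hA']
        field_simp
        linear_combination (-(stirling1 (n + 1) m : ℚ)) * hfac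
      rw [Finset.sum_congr rfl key]
      rw [a]
      push_cast
      rw [Finset.sum_div]
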